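/- Let k ≥ 1 and a ∈ (0,1) with a ≠ 1/2. There exists a two-variable real polynomial P_k(n, l) of the form P_k(n, l) = ((1−2a)n − l)^k + R_k(n, l), where R_k is a polynomial of total degree at most k−1 in (n, l), such that for all n ∈ ℕ and all integers 0 ≤ i < 3ⁿ, Δ_{k,a}(I_{n,i}) = a^{n−l(i)−k} (1−2a)^{l(i)−k} P_k(n, l(i)), where l(i) denotes the number of digits equal to 1 in the ternary representation of the integer i. -/

import Mathlib

open Filter Topology MeasureTheory Set
open scoped ENNReal

/-- The `(n+1)`-th ternary digit of `x` (choosing the expansion ending in all `0`s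
when two expansions exist, and the all-`2`s expansion for `x = 1`). -/
noncomputable def tDigit (x : ℝ) (n : ℕ) : ℕ :=
  if x = 1 then 2 else (⌊(3:ℝ) ^ (n + 1) * x⌋ - 3 * ⌊(3:ℝ) ^ n * x⌋).toNat

/-- `l_n(x)`: the number of `1`s among the first `n` ternary digits of `x`. -/
noncomputable def lCount (x : ℝ) (n : ℕ) : ℕ :=
  ((Finset.range n).filter (fun i => tDigit x i = 1)).card

/-- `q_a(d)` with `q_a(0)=0`, `q_a(1)=a`, `q_a(2)=1-a`. -/
noncomputable def qDig (a : ℝ) (d : ℕ) : ℝ :=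
  if d = 0 then 0 else if d = 1 then a else 1 - a

/-- Okamoto's function `F_a`. -/
noncomputable def Okamoto (a x : ℝ) : ℝ :=
  ∑' n : ℕ, a ^ (n - lCount x n) * (1 - 2 * a) ^ lCount x n * qDig a (tDigit x n)

/-- `M_{k,a}(x)`: the `k`-th partial derivative of `F_a(x)` with respect to `a`. -/
noncomputable def Mfun (k : ℕ) (a x : ℝ) : ℝ :=
  iteratedDeriv k (fun b => Okamoto b x) a

/-- `f` has derivative `+∞` at `x` (difference quotients over `y ∈ [0,1] \ {x}`). -/
def derivPInf (f : ℝ → ℝ) (x : ℝ) : Prop :=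
  Tendsto (fun y => (f y - f x) / (y - x)) (𝓝[Set.Icc 0 1 \ {x}] x) atTop

/-- `f` has derivative `-∞` at `x`. -/
def derivMInf (f : ℝ → ℝ) (x : ℝ) : Prop :=
  Tendsto (fun y => (f y - f x) / (y - x)) (𝓝[Set.Icc 0 1 \ {x}] x) atBot

noncomputable def phiOk (a : ℝ) : ℝ :=
  if a = 1/3 then 1/3 else if a = 1/2 then 0
  else Real.log (3 * a) / (Real.log a - Real.log |1 - 2 * a|)

noncomputable def C0 (a : ℝ) : ℝ := 1 / (Real.log a - Real.log |1 - 2 * a|)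

noncomputable def hEnt (p : ℝ) : ℝ :=
  (-(p * Real.log p) - (1 - p) * Real.log (1 - p) + (1 - p) * Real.log 2) / Real.log 3

noncomputable def dOk (a : ℝ) : ℝ := hEnt (phiOk a)

noncomputable def dTilde (a : ℝ) : ℝ := hEnt (1 - 2 * a)

lemma floor_nat_div (p q : ℕ) : ⌊(p:ℝ)/(q:ℝ)⌋ = ((p / q : ℕ) : ℤ) := by
  rcases Nat.eq_zero_or_pos q with h|h
  · simp [h]
  · have h0 : (0:ℝ) ≤ (p:ℝ)/(q:ℝ) := by positivity
    rw [← Int.natCast_floor_eq_floor h0, Nat.floor_div_eq_div]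

lemma tDigit_rat {n j : ℕ} (hj : j < 3^n) (m : ℕ) :
    tDigit ((j:ℝ)/3^n) m = if m < n then (j / 3^(n-1-m)) % 3 else 0 := by
  have h3 : (0:ℝ) < 3^n := by positivity
  have hx1 : ((j:ℝ)/3^n) ≠ 1 := by
    have : (j:ℝ) < 3^n := by exact_mod_cast (by push_cast; exact_mod_cast hj : (j:ℝ) < (3:ℝ)^n)
    exact ne_of_lt ((div_lt_one h3).2 this)
  have hfl : ∀ m : ℕ, ⌊(3:ℝ)^m * ((j:ℝ)/3^n)⌋ = ((3^m * j / 3^n : ℕ) : ℤ) := by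
    intro m
    have : (3:ℝ)^m * ((j:ℝ)/3^n) = ((3^m*j : ℕ):ℝ)/((3^n : ℕ):ℝ) := by push_cast; ring
    rw [this, floor_nat_div]
  rw [tDigit, if_neg hx1, hfl, hfl]
  by_cases hm : m < n
  · rw [if_pos hm]
    have e1 : 3^(m+1) * j / 3^n = j / 3^(n-m-1) := by
      have : (3:ℕ)^n = 3^(m+1) * 3^(n-m-1) := by rw [← pow_add]; congr 1; omega
      rw [this, Nat.mul_div_mul_left _ _ (by positivity)]
    have e2 : 3^m * j / 3^n = (j / 3^(n-m-1)) / 3 := by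
      have h1 : (3:ℕ)^n = 3^m * (3^(n-m-1) * 3) := by rw [← pow_succ, ← pow_add]; congr 1; omega
      rw [h1, Nat.mul_div_mul_left _ _ (by positivity), ← Nat.div_div_eq_div_mul]
    rw [e1, e2]
    have e3 : n - 1 - m = n - m - 1 := by omega
    rw [e3]
    set t := j / 3^(n-m-1)
    have ht : t % 3 + 3 * (t / 3) = t := Nat.mod_add_div t 3
    omega
  · rw [if_neg hm]
    have e1 : 3^m * j / 3^n = 3^(m-n) * j := by
      have : (3:ℕ)^m = 3^n * 3^(m-n) := by rw [← pow_add]; congr 1; omega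
      rw [this, mul_assoc, Nat.mul_div_cancel_left _ (by positivity)]
    have e2 : 3^(m+1) * j / 3^n = 3 * (3^(m-n) * j) := by
      have : (3:ℕ)^(m+1) = 3^n * (3 * 3^(m-n)) := by
        rw [(by ring : (3:ℕ)^n * (3 * 3^(m-n)) = 3^n * 3^(m-n) * 3), ← pow_add, ← pow_succ]
        congr 1; omega
      rw [this, mul_assoc, Nat.mul_div_cancel_left _ (by positivity), mul_assoc]
    rw [e1, e2]
    omega

lemma okamoto_rat {n j : ℕ} (hj : j < 3^n) (b : ℝ) :
    Okamoto b ((j:ℝ)/3^n) = ∑ m ∈ Finset.range n,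
      b^(m - lCount ((j:ℝ)/3^n) m) * (1-2*b)^(lCount ((j:ℝ)/3^n) m)
        * qDig b (tDigit ((j:ℝ)/3^n) m) := by
  apply tsum_eq_sum
  intro m hm
  have hd : tDigit ((j:ℝ)/3^n) m = 0 := by
    rw [tDigit_rat hj, if_neg (by simpa using hm)]
  rw [hd]; simp [qDig]

lemma lCount_le (x : ℝ) (m : ℕ) : lCount x m ≤ m := by
  simpa [lCount] using (Finset.card_filter_le (Finset.range m) _)

lemma big_lt {n d j : ℕ} (hd : d < 3) (hj : j < 3^n) : d*3^n+j < 3^(n+1) := by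
  have h1 : d*3^n + j < (d+1)*3^n := by nlinarith
  calc d*3^n+j < (d+1)*3^n := h1
    _ ≤ 3*3^n := Nat.mul_le_mul_right _ hd
    _ = 3^(n+1) := (pow_succ' 3 n).symm

lemma tDigit_shift0 {n d j : ℕ} (hd : d < 3) (hj : j < 3^n) :
    tDigit (((d*3^n+j:ℕ):ℝ)/3^(n+1)) 0 = d := by
  rw [tDigit_rat (big_lt hd hj), if_pos (Nat.succ_pos n)]
  have e0 : n + 1 - 1 - 0 = n := by omega
  rw [e0, (by ring : d*3^n+j = 3^n*d + j), Nat.mul_add_div (by positivity),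
    Nat.div_eq_of_lt hj, Nat.add_zero, Nat.mod_eq_of_lt hd]

lemma tDigit_shift {n d j : ℕ} (hd : d < 3) (hj : j < 3^n) (m : ℕ) :
    tDigit (((d*3^n+j:ℕ):ℝ)/3^(n+1)) (m+1) = tDigit ((j:ℝ)/3^n) m := by
  rw [tDigit_rat (big_lt hd hj), tDigit_rat hj]
  by_cases hm : m < n
  · rw [if_pos (by omega), if_pos hm]
    have e0 : n + 1 - 1 - (m+1) = n - 1 - m := by omega
    rw [e0]
    have e1 : d*3^n+j = 3^(n-1-m) * ((d*3^m)*3) + j := by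
      rw [(by rw [← pow_add]; congr 1; omega : (3:ℕ)^n = 3^(n-1-m) * 3^(m+1))]
      ring
    rw [e1, Nat.mul_add_div (by positivity), add_comm, Nat.add_mul_mod_self_right]
  · rw [if_neg (by omega), if_neg hm]

lemma lCount_shift {n d j : ℕ} (hd : d < 3) (hj : j < 3^n) (m : ℕ) :
    lCount (((d*3^n+j:ℕ):ℝ)/3^(n+1)) (m+1)
      = lCount ((j:ℝ)/3^n) m + (if d = 1 then 1 else 0) := by
  simp only [lCount, Finset.card_filter]
  rw [Finset.sum_range_succ']
  congr 1
  · exact Finset.sum_congr rfl fun i _ => by rw [tDigit_shift hd hj]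
  · rw [tDigit_shift0 hd hj]

lemma okamoto_rec {n d j : ℕ} (hd : d < 3) (hj : j < 3^n) (b : ℝ) :
    Okamoto b (((d*3^n+j:ℕ):ℝ)/3^(n+1)) =
      qDig b d + (if d = 1 then 1-2*b else b) * Okamoto b ((j:ℝ)/3^n) := by
  rw [okamoto_rat (big_lt hd hj), okamoto_rat hj, Finset.sum_range_succ']
  have h0 : lCount (((d*3^n+j:ℕ):ℝ)/3^(n+1)) 0 = 0 := by simp [lCount]
  rw [h0, tDigit_shift0 hd hj]
  simp only [pow_zero, Nat.sub_zero, one_mul, mul_one]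
  rw [add_comm, Finset.mul_sum]
  congr 1
  refine Finset.sum_congr rfl fun m _ => ?_
  rw [lCount_shift hd hj, tDigit_shift hd hj]
  have hlc := lCount_le ((j:ℝ)/3^n) m
  by_cases hd1 : d = 1
  · rw [if_pos hd1, if_pos hd1]
    have e : m + 1 - (lCount ((j:ℝ)/3^n) m + 1) = m - lCount ((j:ℝ)/3^n) m := by omega
    rw [e, pow_succ]
    ring
  · rw [if_neg hd1, if_neg hd1, add_zero]
    have e : m + 1 - lCount ((j:ℝ)/3^n) m = (m - lCount ((j:ℝ)/3^n) m) + 1 := by omega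
    rw [e, pow_succ]
    ring

lemma okamoto_zero (b : ℝ) : Okamoto b 0 = 0 := by
  have h := okamoto_rat (n := 0) (j := 0) (by norm_num) b
  simpa using h

lemma okamoto_one {b : ℝ} (hb : b ∈ Set.Ioo (0:ℝ) 1) : Okamoto b 1 = 1 := by
  have hd : ∀ m : ℕ, tDigit 1 m = 2 := fun m => by simp [tDigit]
  have hl : ∀ m : ℕ, lCount 1 m = 0 := fun m => by simp [lCount, hd]
  have hq : qDig b 2 = 1 - b := by simp [qDig]
  unfold Okamoto
  simp only [hd, hl, hq, Nat.sub_zero, pow_zero, one_mul, mul_one]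
  rw [tsum_mul_right, tsum_geometric_of_lt_one hb.1.le hb.2]
  rw [inv_mul_cancel₀ (by linarith [hb.2] : (1:ℝ) - b ≠ 0)]

lemma count_digits_step (j : ℕ) :
    (Nat.digits 3 j).count 1 = (if j % 3 = 1 then 1 else 0) + (Nat.digits 3 (j/3)).count 1 := by
  rcases Nat.eq_zero_or_pos j with h|h
  · subst h; simp
  · rw [Nat.digits_def' (by norm_num : 1 < 3) h, List.count_cons]
    simp only [beq_iff_eq]
    omega

lemma count_digits_add {n : ℕ} : ∀ {d j : ℕ}, d < 3 → j < 3^n →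
    (Nat.digits 3 (d*3^n+j)).count 1 = (Nat.digits 3 j).count 1 + (if d = 1 then 1 else 0) := by
  induction n with
  | zero =>
    intro d j hd hj
    interval_cases j
    interval_cases d <;> simp
  | succ n ih =>
    intro d j hd hj
    rcases Nat.eq_zero_or_pos d with h0|h0
    · subst h0; simp
    · have h3 : (3:ℕ)^(n+1) = 3^n*3 := pow_succ 3 n
      have e1 : d*3^(n+1)+j = 3*(d*3^n) + j := by rw [h3]; ring
      rw [count_digits_step (d*3^(n+1)+j), count_digits_step j]
      have em : (d*3^(n+1)+j) % 3 = j % 3 := by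
        rw [e1, Nat.mul_add_mod]
      have ed : (d*3^(n+1)+j) / 3 = d*3^n + j/3 := by
        rw [e1, Nat.mul_add_div (by norm_num)]
      have hj3 : j/3 < 3^n := Nat.div_lt_of_lt_mul (by rw [mul_comm, ← h3]; exact hj)
      rw [em, ed, ih hd hj3]
      omega

lemma count_digits_le {n j : ℕ} (hj : j < 3^n) : (Nat.digits 3 j).count 1 ≤ n := by
  have hlen : (Nat.digits 3 j).length ≤ n := by
    by_contra h
    push_neg at h
    rcases Nat.eq_zero_or_pos j with h0|h0
    · simp [h0] at h
    · have h1 := Nat.base_pow_length_digits_le 3 j (by norm_num) (Nat.pos_iff_ne_zero.1 h0)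
      have h2 : (3:ℕ)^(n+1) ≤ 3^(Nat.digits 3 j).length := Nat.pow_le_pow_right (by norm_num) h
      have h3 : (3:ℕ)^(n+1) = 3*3^n := by ring
      nlinarith [hj]
  exact le_trans List.count_le_length hlen

lemma okamoto_rec' {n d m : ℕ} (hd : d < 3) (hm : m ≤ 3^n) {b : ℝ} (hb : b ∈ Set.Ioo (0:ℝ) 1) :
    Okamoto b (((d*3^n+m:ℕ):ℝ)/3^(n+1)) =
      qDig b d + (if d = 1 then 1-2*b else b) * Okamoto b ((m:ℝ)/3^n) := by
  rcases lt_or_eq_of_le hm with h|h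
  · exact okamoto_rec hd h b
  · subst h
    have h3 : (0:ℝ) < (3:ℝ)^n := by positivity
    have hx : ((3^n:ℕ):ℝ)/(3:ℝ)^n = 1 := by push_cast; exact div_self (ne_of_gt h3)
    have hpt : ((d*3^n+3^n:ℕ):ℝ)/(3:ℝ)^(n+1) = ((d+1:ℕ):ℝ)/3 := by
      push_cast
      rw [pow_succ, div_eq_div_iff (by positivity) (by norm_num)]
      ring
    rw [hpt, hx, okamoto_one hb]
    by_cases hd2 : d < 2
    · have key := okamoto_rec (n := 0) (d := d+1) (j := 0) (by omega) (by norm_num) b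
      have e1 : ((d+1)*3^0+0 : ℕ) = (d+1 : ℕ) := by norm_num
      have e2 : ((0:ℕ):ℝ)/(3:ℝ)^0 = 0 := by norm_num
      rw [e1, e2, okamoto_zero] at key
      norm_num at key
      push_cast at key ⊢
      rw [key]
      interval_cases d <;> simp [qDig] <;> ring
    · have hd2' : d = 2 := by omega
      subst hd2'
      have e3 : ((2+1:ℕ):ℝ)/3 = 1 := by norm_num
      rw [e3, okamoto_one hb]
      simp [qDig]

lemma okamoto_inc {b : ℝ} (hb : b ∈ Set.Ioo (0:ℝ) 1) :
    ∀ n, ∀ i, i < 3^n → Okamoto b (((i+1:ℕ):ℝ)/3^n) - Okamoto b ((i:ℝ)/3^n)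
      = b^(n - (Nat.digits 3 i).count 1) * (1-2*b)^((Nat.digits 3 i).count 1) := by
  intro n
  induction n with
  | zero =>
    intro i hi
    interval_cases i
    norm_num [okamoto_zero, okamoto_one hb]
  | succ n ih =>
    intro i hi
    have hp : (0:ℕ) < 3^n := by positivity
    set d := i / 3^n with hdd
    set j := i % 3^n with hjd
    have hid : i = d*3^n + j := by rw [hdd, hjd, mul_comm]; exact (Nat.div_add_mod i (3^n)).symm
    have hd : d < 3 := by
      rw [hdd]
      rw [pow_succ] at hi
      exact Nat.div_lt_of_lt_mul hi
    have hj : j < 3^n := Nat.mod_lt _ hp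
    have h1 : i + 1 = d*3^n + (j+1) := by omega
    have hLle := count_digits_le hj
    have hL : (Nat.digits 3 i).count 1 = (Nat.digits 3 j).count 1 + (if d = 1 then 1 else 0) := by
      rw [hid]; exact count_digits_add hd hj
    rw [h1, hid, okamoto_rec' hd (by omega) hb, okamoto_rec hd hj b,
      count_digits_add hd hj]
    have hih := ih j hj
    by_cases hd1 : d = 1
    · rw [if_pos hd1, if_pos hd1]
      have e : n + 1 - ((Nat.digits 3 j).count 1 + 1) = n - (Nat.digits 3 j).count 1 := by omega
      rw [e, pow_succ]
      linear_combination (1-2*b) * hih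
    · rw [if_neg hd1, if_neg hd1, add_zero]
      have e : n + 1 - (Nat.digits 3 j).count 1 = (n - (Nat.digits 3 j).count 1) + 1 := by omega
      rw [e, pow_succ]
      linear_combination b * hih

section KeyDiff
open Polynomial

noncomputable def qP (d : ℕ) : ℝ[X] :=
  if d = 0 then 0 else if d = 1 then X else 1 - X

lemma qP_eval (d : ℕ) (b : ℝ) : (qP d).eval b = qDig b d := by
  unfold qP qDig; split_ifs <;> simp

lemma okamoto_poly {n j : ℕ} (hj : j ≤ 3^n) :
    ∃ Q : ℝ[X], ∀ b ∈ Set.Ioo (0:ℝ) 1, Okamoto b ((j:ℝ)/3^n) = Q.eval b := by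
  rcases lt_or_eq_of_le hj with h|h
  · refine ⟨∑ m ∈ Finset.range n, X^(m - lCount ((j:ℝ)/3^n) m)
      * (1-2*X)^(lCount ((j:ℝ)/3^n) m) * qP (tDigit ((j:ℝ)/3^n) m), fun b hb => ?_⟩
    rw [okamoto_rat h, eval_finset_sum]
    refine Finset.sum_congr rfl fun m _ => ?_
    simp [qP_eval]
  · subst h
    refine ⟨1, fun b hb => ?_⟩
    have hx : ((3^n:ℕ):ℝ)/(3:ℝ)^n = 1 := by
      push_cast; exact div_self (by positivity)
    rw [hx, okamoto_one hb, eval_one]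

lemma iteratedDeriv_poly (Q : ℝ[X]) (k : ℕ) :
    iteratedDeriv k (fun b => Q.eval b) = fun b => (derivative^[k] Q).eval b := by
  induction k with
  | zero => simp [iteratedDeriv_zero]
  | succ k ih =>
    rw [iteratedDeriv_succ, ih, Function.iterate_succ_apply']
    funext x
    exact Polynomial.deriv _

lemma itd_congr {f g : ℝ → ℝ} {s : Set ℝ} (hs : IsOpen s) (h : ∀ b ∈ s, f b = g b) :
    ∀ k, ∀ x ∈ s, iteratedDeriv k f x = iteratedDeriv k g x := by
  intro k
  induction k with
  | zero => simpa [iteratedDeriv_zero] using h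
  | succ k ih =>
    intro x hx
    rw [iteratedDeriv_succ, iteratedDeriv_succ]
    exact Filter.EventuallyEq.deriv_eq
      (Filter.eventuallyEq_of_mem (hs.mem_nhds hx) fun y hy => ih y hy)

lemma iter_deriv_sub (k : ℕ) (p q : ℝ[X]) :
    derivative^[k] (p - q) = derivative^[k] p - derivative^[k] q := by
  induction k with
  | zero => simp
  | succ k ih => rw [Function.iterate_succ_apply', Function.iterate_succ_apply',
      Function.iterate_succ_apply', ih, derivative_sub]

lemma key_diff {n i k : ℕ} (hi : i < 3^n) {a : ℝ} (ha : a ∈ Set.Ioo (0:ℝ) 1) :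
    Mfun k a (((i:ℝ)+1)/3^n) - Mfun k a ((i:ℝ)/3^n)
      = (derivative^[k] ((X:ℝ[X])^(n - (Nat.digits 3 i).count 1)
          * (1 - 2*X)^((Nat.digits 3 i).count 1))).eval a := by
  obtain ⟨Q1, hQ1⟩ := okamoto_poly (n := n) (j := i+1) hi
  obtain ⟨Q0, hQ0⟩ := okamoto_poly (n := n) (j := i) hi.le
  have hcast : ((i:ℝ)+1) = ((i+1:ℕ):ℝ) := by push_cast; ring
  have hm1 : Mfun k a (((i:ℝ)+1)/3^n) = (derivative^[k] Q1).eval a := by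
    unfold Mfun
    rw [hcast, itd_congr isOpen_Ioo hQ1 k a ha, iteratedDeriv_poly]
  have hm0 : Mfun k a ((i:ℝ)/3^n) = (derivative^[k] Q0).eval a := by
    unfold Mfun
    rw [itd_congr isOpen_Ioo hQ0 k a ha, iteratedDeriv_poly]
  have hpq : Q1 - Q0 = (X:ℝ[X])^(n - (Nat.digits 3 i).count 1)
      * (1 - 2*X)^((Nat.digits 3 i).count 1) := by
    apply Polynomial.eq_of_infinite_eval_eq
    apply Set.Infinite.mono (s := Set.Ioo (0:ℝ) 1) ?_ (Set.Ioo_infinite (by norm_num))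
    intro b hb
    have h1 := okamoto_inc hb n i hi
    have e2 : Polynomial.eval b ((X:ℝ[X])^(n - (Nat.digits 3 i).count 1)
        * (1-2*X)^((Nat.digits 3 i).count 1))
        = b^(n - (Nat.digits 3 i).count 1) * (1-2*b)^((Nat.digits 3 i).count 1) := by
      simp
    show Polynomial.eval b (Q1 - Q0) = _
    rw [eval_sub, ← hQ1 b hb, ← hQ0 b hb, e2, h1]
  rw [hm1, hm0, ← eval_sub, ← iter_deriv_sub, hpq]
end KeyDiff

open Polynomial in
lemma deriv_q2 : derivative (1 - 2*X : ℝ[X]) = Polynomial.C (-2) := by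
  simp
  exact (map_ofNat C 2).symm

open Polynomial in
lemma iter_deriv_q2 (L : ℕ) : ∀ j : ℕ, derivative^[j] ((1 - 2*X : ℝ[X])^L)
    = C ((L.descFactorial j : ℝ) * (-2)^j) * (1 - 2*X)^(L - j) := by
  intro j
  induction j with
  | zero => simp
  | succ j ih =>
    rw [Function.iterate_succ_apply', ih, derivative_C_mul, derivative_pow, deriv_q2,
      Nat.descFactorial_succ, Nat.cast_mul,
      show L - j - 1 = L - (j+1) from by omega]
    have e : ((L - j : ℕ):ℝ) * (L.descFactorial j : ℝ) * (-2:ℝ)^(j+1)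
        = (((L.descFactorial j : ℝ)) * (-2)^j) * (((L-j:ℕ):ℝ) * (-2)) := by ring
    rw [e]
    simp only [map_mul, map_neg, map_pow, map_ofNat]
    ring

lemma descFactorial_cast (M : ℕ) : ∀ t : ℕ,
    ((M.descFactorial t : ℕ):ℝ) = ∏ i ∈ Finset.range t, ((M:ℝ) - i) := by
  intro t
  induction t with
  | zero => simp
  | succ t ih =>
    rw [Finset.prod_range_succ, ← ih, Nat.descFactorial_succ]
    rcases lt_or_ge M t with h|h
    · have h0 : M.descFactorial t = 0 := Nat.descFactorial_eq_zero_iff_lt.2 h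
      simp [h0]
    · rw [Nat.cast_mul, Nat.cast_sub h]
      ring

open Polynomial in
lemma eval_iter_deriv (M L k : ℕ) (a : ℝ) :
    (derivative^[k] ((X:ℝ[X])^M * (1 - 2*X)^L)).eval a
      = ∑ j ∈ Finset.range (k+1), (k.choose j : ℝ) * (M.descFactorial (k-j) : ℝ)
        * ((L.descFactorial j : ℝ) * (-2)^j) * a^(M-(k-j)) * (1-2*a)^(L-j) := by
  rw [Polynomial.iterate_derivative_mul, eval_finset_sum]
  refine Finset.sum_congr rfl fun j hj => ?_
  rw [nsmul_eq_mul, iterate_derivative_X_pow_eq_C_mul, iter_deriv_q2]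
  simp only [eval_mul, eval_natCast, eval_C, eval_pow, eval_X, eval_sub, eval_one, eval_ofNat]
  ring

noncomputable def descP (q : MvPolynomial (Fin 2) ℝ) (t : ℕ) : MvPolynomial (Fin 2) ℝ :=
  ∏ i ∈ Finset.range t, (q - MvPolynomial.C (i:ℝ))

lemma descP_eval (q : MvPolynomial (Fin 2) ℝ) (t : ℕ) (v : Fin 2 → ℝ) :
    MvPolynomial.eval v (descP q t)
      = ∏ i ∈ Finset.range t, (MvPolynomial.eval v q - i) := by
  simp [descP]

lemma descP_decomp (q : MvPolynomial (Fin 2) ℝ) (hq : q.totalDegree ≤ 1) (t : ℕ) :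
    ∃ r, descP q t = q^t + r ∧ r.totalDegree ≤ t - 1 ∧ (t = 0 → r = 0) := by
  induction t with
  | zero => exact ⟨0, by simp [descP], by simp, fun _ => rfl⟩
  | succ t ih =>
    obtain ⟨r, hr, hdeg, h0⟩ := ih
    refine ⟨r*q - MvPolynomial.C (t:ℝ)*q^t - MvPolynomial.C (t:ℝ)*r, ?_, ?_,
      fun h => absurd h t.succ_ne_zero⟩
    · rw [descP, Finset.prod_range_succ, ← descP, hr]; ring
    · rcases Nat.eq_zero_or_pos t with ht|ht
      · subst ht
        rw [h0 rfl]
        norm_num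
      · have b1 : (r*q).totalDegree ≤ t := by
          refine le_trans (MvPolynomial.totalDegree_mul _ _) ?_
          have := hdeg; omega
        have b2 : (MvPolynomial.C (t:ℝ)*q^t).totalDegree ≤ t := by
          refine le_trans (MvPolynomial.totalDegree_mul _ _) ?_
          have h3 := MvPolynomial.totalDegree_pow q t
          have h4 : t * q.totalDegree ≤ t * 1 := Nat.mul_le_mul_left t hq
          simp only [MvPolynomial.totalDegree_C]
          omega
        have b3 : (MvPolynomial.C (t:ℝ)*r).totalDegree ≤ t := by
          refine le_trans (MvPolynomial.totalDegree_mul _ _) ?_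
          simp only [MvPolynomial.totalDegree_C]
          omega
        have c1 := MvPolynomial.totalDegree_sub (r*q) (MvPolynomial.C (t:ℝ)*q^t)
        have c2 := MvPolynomial.totalDegree_sub (r*q - MvPolynomial.C (t:ℝ)*q^t)
          (MvPolynomial.C (t:ℝ)*r)
        simp only [Nat.add_sub_cancel]
        omega

open MvPolynomial in
lemma poly_exists (a : ℝ) (k : ℕ) (hk : 1 ≤ k) :
    ∃ R : MvPolynomial (Fin 2) ℝ, R.totalDegree ≤ k - 1 ∧
      ∀ n L : ℕ, L ≤ n →
        ∑ j ∈ Finset.range (k+1), (k.choose j : ℝ) * (-2*a)^j * (1-2*a)^(k-j)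
            * ((n-L).descFactorial (k-j) : ℝ) * (L.descFactorial j : ℝ)
        = ((1-2*a)*(n:ℝ) - (L:ℝ))^k + MvPolynomial.eval ![(n:ℝ), (L:ℝ)] R := by
  classical
  set q1 : MvPolynomial (Fin 2) ℝ := X 0 - X 1 with hq1d
  set q2 : MvPolynomial (Fin 2) ℝ := X 1 with hq2d
  have hq1 : q1.totalDegree ≤ 1 := by
    refine le_trans (MvPolynomial.totalDegree_sub _ _) ?_
    simp [MvPolynomial.totalDegree_X]
  have hq2 : q2.totalDegree ≤ 1 := by simp [hq2d, MvPolynomial.totalDegree_X]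
  set c : ℕ → ℝ := fun j => (k.choose j : ℝ) * (-2*a)^j * (1-2*a)^(k-j) with hc
  set P : MvPolynomial (Fin 2) ℝ :=
    ∑ j ∈ Finset.range (k+1), C (c j) * (descP q1 (k-j) * descP q2 j) with hP
  set LT : MvPolynomial (Fin 2) ℝ := (C (1-2*a) * X 0 - X 1)^k with hLT
  have hLTsum : LT = ∑ j ∈ Finset.range (k+1), C (c j) * (q1^(k-j) * q2^j) := by
    have hCsplit : (C (-2*a) : MvPolynomial (Fin 2) ℝ) = C (1-2*a) - 1 := by
      rw [← map_one (C : ℝ →+* MvPolynomial (Fin 2) ℝ), ← map_sub]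
      congr 1; ring
    have hsplit : (C (1-2*a) * X 0 - X 1 : MvPolynomial (Fin 2) ℝ)
        = C (-2*a) * q2 + C (1-2*a) * q1 := by
      rw [hCsplit, hq1d, hq2d]; ring
    rw [hLT, hsplit, add_pow]
    refine Finset.sum_congr rfl fun j hj => ?_
    rw [hc]
    simp only [map_mul, map_natCast, map_pow, mul_pow]
    ring
  refine ⟨P - LT, ?_, ?_⟩
  · have hdiff : P - LT = ∑ j ∈ Finset.range (k+1),
        (C (c j) * (descP q1 (k-j) * descP q2 j) - C (c j) * (q1^(k-j) * q2^j)) := by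
      rw [hP, hLTsum, Finset.sum_sub_distrib]
    rw [hdiff]
    refine le_trans (MvPolynomial.totalDegree_finset_sum _ _) ?_
    rw [Finset.sup_le_iff]
    intro j hj
    have hjk : j ≤ k := by simpa using Nat.lt_succ_iff.1 (Finset.mem_range.1 hj)
    obtain ⟨r, hr, hrdeg, hr0⟩ := descP_decomp q1 hq1 (k-j)
    obtain ⟨s, hs, hsdeg, hs0⟩ := descP_decomp q2 hq2 j
    have hterm : C (c j) * (descP q1 (k-j) * descP q2 j) - C (c j) * (q1^(k-j) * q2^j)
        = C (c j) * (q1^(k-j) * s + r * q2^j + r * s) := by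
      rw [hr, hs]; ring
    rw [hterm]
    refine le_trans (MvPolynomial.totalDegree_mul _ _) ?_
    simp only [MvPolynomial.totalDegree_C, zero_add]
    have hp1 : (q1^(k-j)).totalDegree ≤ k - j :=
      le_trans (MvPolynomial.totalDegree_pow _ _)
        (by have := Nat.mul_le_mul_left (k-j) hq1; omega)
    have hp2 : (q2^j).totalDegree ≤ j :=
      le_trans (MvPolynomial.totalDegree_pow _ _)
        (by have := Nat.mul_le_mul_left j hq2; omega)
    have d1 : (q1^(k-j) * s).totalDegree ≤ k - 1 := by
      rcases Nat.eq_zero_or_pos j with hj0|hj0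
      · rw [hs0 hj0, mul_zero]; simp
      · refine le_trans (MvPolynomial.totalDegree_mul _ _) ?_
        omega
    have d2 : (r * q2^j).totalDegree ≤ k - 1 := by
      rcases Nat.eq_zero_or_pos (k-j) with hj0|hj0
      · rw [hr0 hj0, zero_mul]; simp
      · refine le_trans (MvPolynomial.totalDegree_mul _ _) ?_
        omega
    have d3 : (r * s).totalDegree ≤ k - 1 := by
      rcases Nat.eq_zero_or_pos j with hj0|hj0
      · rw [hs0 hj0, mul_zero]; simp
      · rcases Nat.eq_zero_or_pos (k-j) with hj1|hj1
        · rw [hr0 hj1, zero_mul]; simp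
        · refine le_trans (MvPolynomial.totalDegree_mul _ _) ?_
          omega
    have e1 := MvPolynomial.totalDegree_add (q1^(k-j) * s) (r * q2^j)
    have e2 := MvPolynomial.totalDegree_add (q1^(k-j) * s + r * q2^j) (r * s)
    omega
  · intro n L hL
    have hvP : MvPolynomial.eval ![(n:ℝ), (L:ℝ)] P
        = ∑ j ∈ Finset.range (k+1), c j * ((n-L).descFactorial (k-j) : ℝ)
            * (L.descFactorial j : ℝ) := by
      rw [hP]
      simp only [map_sum, MvPolynomial.eval_mul, MvPolynomial.eval_C]
      refine Finset.sum_congr rfl fun j hj => ?_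
      rw [descP_eval, descP_eval, descFactorial_cast, descFactorial_cast]
      have hv2 : MvPolynomial.eval ![(n:ℝ), (L:ℝ)] q2 = (L:ℝ) := by
        rw [hq2d, MvPolynomial.eval_X]
        simp
      have hv1 : MvPolynomial.eval ![(n:ℝ), (L:ℝ)] q1 = ((n-L:ℕ):ℝ) := by
        rw [hq1d, Nat.cast_sub hL]
        simp [hv2]
      rw [hv1, hv2]
      ring
    have hvLT : MvPolynomial.eval ![(n:ℝ), (L:ℝ)] LT = ((1-2*a)*(n:ℝ) - (L:ℝ))^k := by
      rw [hLT]
      simp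
    have : MvPolynomial.eval ![(n:ℝ), (L:ℝ)] (P - LT)
        = MvPolynomial.eval ![(n:ℝ), (L:ℝ)] P - MvPolynomial.eval ![(n:ℝ), (L:ℝ)] LT := by
      simp
    rw [this, hvP, hvLT]
    have : ∀ j ∈ Finset.range (k+1),
        (k.choose j : ℝ) * (-2*a)^j * (1-2*a)^(k-j)
            * ((n-L).descFactorial (k-j) : ℝ) * (L.descFactorial j : ℝ)
        = c j * ((n-L).descFactorial (k-j) : ℝ) * (L.descFactorial j : ℝ) := by
      intro j hj; rw [hc]
    rw [Finset.sum_congr rfl this]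
    ring

/-- for `k ≥ 1` and `a ∈ (0,1)`, `a ≠ 1/2`, there is a two-variable
polynomial `P_k(n,l) = ((1-2a)n - l)^k + R_k(n,l)` with `deg R_k ≤ k-1` such that
`Δ_{k,a}(I_{n,i}) = a^{n-l(i)-k} (1-2a)^{l(i)-k} P_k(n, l(i))` for all `n` and `0 ≤ i < 3^n`,
where `l(i)` counts the ternary digits of `i` equal to `1`. -/
theorem stmt19 (k : ℕ) (hk : 1 ≤ k) (a : ℝ) (ha : a ∈ Set.Ioo (0:ℝ) 1) (ha' : a ≠ 1/2) :
    ∃ R : MvPolynomial (Fin 2) ℝ, R.totalDegree ≤ k - 1 ∧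
      ∀ n : ℕ, ∀ i : ℕ, i < 3 ^ n →
        Mfun k a (((i : ℝ) + 1) / 3 ^ n) - Mfun k a ((i : ℝ) / 3 ^ n) =
          a ^ ((n : ℤ) - ((Nat.digits 3 i).count 1 : ℤ) - (k : ℤ)) *
          (1 - 2 * a) ^ (((Nat.digits 3 i).count 1 : ℤ) - (k : ℤ)) *
          (((1 - 2 * a) * (n : ℝ) - ((Nat.digits 3 i).count 1 : ℝ)) ^ k +
            MvPolynomial.eval ![(n : ℝ), ((Nat.digits 3 i).count 1 : ℝ)] R) := by
  obtain ⟨R, hRdeg, hR⟩ := poly_exists a k hk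
  refine ⟨R, hRdeg, ?_⟩
  intro n i hi
  have ha0 : a ≠ 0 := ne_of_gt ha.1
  have hc0 : (1:ℝ) - 2*a ≠ 0 := by
    intro h
    apply ha'
    linarith
  set L : ℕ := (Nat.digits 3 i).count 1 with hLdef
  have hL : L ≤ n := count_digits_le hi
  rw [key_diff hi ha, eval_iter_deriv]
  have hconv : ∀ j ∈ Finset.range (k+1),
      (k.choose j : ℝ) * ((n-L).descFactorial (k-j) : ℝ)
        * ((L.descFactorial j : ℝ) * (-2)^j) * a^((n-L)-(k-j)) * (1-2*a)^(L-j)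
      = a ^ ((n : ℤ) - (L : ℤ) - (k : ℤ)) * (1 - 2*a) ^ ((L : ℤ) - (k : ℤ)) *
        ((k.choose j : ℝ) * (-2*a)^j * (1-2*a)^(k-j)
          * ((n-L).descFactorial (k-j) : ℝ) * (L.descFactorial j : ℝ)) := by
    intro j hj
    have hjk : j ≤ k := Nat.lt_succ_iff.1 (Finset.mem_range.1 hj)
    by_cases h1 : k - j ≤ n - L
    · by_cases h2 : j ≤ L
      · have ea : a^((n-L)-(k-j)) = a ^ ((n : ℤ) - (L : ℤ) - (k : ℤ)) * a^j := by
          rw [← zpow_natCast a ((n-L)-(k-j)), ← zpow_natCast a j, ← zpow_add₀ ha0]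
          congr 1
          omega
        have eb : (1-2*a)^(L-j) = (1-2*a) ^ ((L : ℤ) - (k : ℤ)) * (1-2*a)^(k-j) := by
          rw [← zpow_natCast (1-2*a) (L-j), ← zpow_natCast (1-2*a) (k-j), ← zpow_add₀ hc0]
          congr 1
          omega
        rw [ea, eb]
        ring
      · have hz : (L.descFactorial j : ℝ) = 0 := by
          rw [Nat.descFactorial_eq_zero_iff_lt.2 (by omega)]
          simp
        rw [hz]
        ring
    · have hz : ((n-L).descFactorial (k-j) : ℝ) = 0 := by
        rw [Nat.descFactorial_eq_zero_iff_lt.2 (by omega)]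
        simp
      rw [hz]
      ring
  rw [Finset.sum_congr rfl hconv, ← Finset.mul_sum, hR n L hL]
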